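/- Let η : ∂U → ℝⁿ satisfy ‖η(x)‖ = r for all x and Lip(η) ≤ 1. Then for every t ∈ (−1/2, 1/2) and all x, y ∈ ∂U, one has ‖(x + t·η(x)) − (y + t·η(y))‖ ≥ √(1 − 2|t|)·‖x − y‖. -/

import Mathlib

theorem stmt1 (n : ℕ) (U : Set (EuclideanSpace ℝ (Fin n))) (hU : IsOpen U)
    (r : ℝ) (hr : 0 < r) (η : EuclideanSpace ℝ (Fin n) → EuclideanSpace ℝ (Fin n))
    (hnorm : ∀ x ∈ frontier U, ‖η x‖ = r)
    (hlip : ∀ x ∈ frontier U, ∀ y ∈ frontier U, ‖η x - η y‖ ≤ ‖x - y‖) :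
    ∀ t ∈ Set.Ioo (-(1/2) : ℝ) (1/2), ∀ x ∈ frontier U, ∀ y ∈ frontier U,
      Real.sqrt (1 - 2 * |t|) * ‖x - y‖ ≤ ‖(x + t • η x) - (y + t • η y)‖ := by
  intro t ht x hx y hy
  set a := x - y with ha
  set b := η x - η y with hb
  have hd : (x + t • η x) - (y + t • η y) = a + t • b := by
    simp only [ha, hb, smul_sub]; abel
  rw [hd]
  have hsq : (1 - 2 * |t|) * ‖a‖ ^ 2 ≤ ‖a + t • b‖ ^ 2 := by
    have hexp : ‖a + t • b‖ ^ 2 = ‖a‖ ^ 2 + 2 * (t * inner ℝ a b) + t ^ 2 * ‖b‖ ^ 2 := by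
      rw [@norm_add_sq_real]
      rw [real_inner_smul_right, norm_smul]
      ring_nf
      rw [Real.norm_eq_abs, sq_abs]
    have hib : |inner ℝ a b| ≤ ‖a‖ * ‖b‖ := abs_real_inner_le_norm a b
    have hblip : ‖b‖ ≤ ‖a‖ := hlip x hx y hy
    have h1 : |t * inner ℝ a b| ≤ |t| * (‖a‖ * ‖a‖) := by
      rw [abs_mul]
      exact mul_le_mul (le_refl _) (hib.trans (by nlinarith [norm_nonneg a, norm_nonneg b]))
        (abs_nonneg _) (abs_nonneg _)
    have h2 : -(|t| * (‖a‖ * ‖a‖)) ≤ t * inner ℝ a b := (abs_le.mp h1).1.trans_eq' (by ring_nf)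
    nlinarith [sq_nonneg t, sq_nonneg ‖b‖]
  have h1 : Real.sqrt (1 - 2 * |t|) * ‖a‖ = Real.sqrt ((1 - 2 * |t|) * ‖a‖ ^ 2) := by
    rw [Real.sqrt_mul' _ (by positivity), Real.sqrt_sq (norm_nonneg a)]
  rw [h1]
  calc Real.sqrt ((1 - 2 * |t|) * ‖a‖ ^ 2) ≤ Real.sqrt (‖a + t • b‖ ^ 2) :=
        Real.sqrt_le_sqrt hsq
    _ = ‖a + t • b‖ := Real.sqrt_sq (norm_nonneg _)
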